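/- Let q be a power of an odd prime p and n ≥ 1. Every non-degenerate hermitian form on an n-dimensional F_{q^2}-vector space is isomorphic to the standard one. Equivalently, in matrix terms: for every invertible n×n matrix M over F_{q^2} satisfying conj(M)ᵀ = M (where conj is the entrywise q-power map), there exists A ∈ GL_n(F_{q^2}) such that conj(A)ᵀ · M · A = 1_n. -/

import Mathlib

open Matrix


section HermAux
variable {F : Type} [Field F] (σ : F →+* F)

/-- The hermitian pairing associated to a matrix. -/
def hermPhi {n : ℕ} (M : Matrix (Fin n) (Fin n) F) (v w : Fin n → F) : F :=
  ∑ k, ∑ l, σ (v k) * M k l * w l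

lemma hermPhi_entry {n : ℕ} (M B C : Matrix (Fin n) (Fin n) F) (i j : Fin n) :
    ((B.map σ)ᵀ * M * C) i j = hermPhi σ M (fun k => B k i) (fun k => C k j) := by
  simp only [hermPhi, Matrix.mul_apply, Matrix.transpose_apply, Matrix.map_apply,
    Finset.sum_mul, Finset.mul_sum]
  rw [Finset.sum_comm]

lemma hermPhi_single_single {n : ℕ} (M : Matrix (Fin n) (Fin n) F) (i j : Fin n) (a b : F) :
    hermPhi σ M (Pi.single i a) (Pi.single j b) = σ a * M i j * b := by
  simp [hermPhi, Pi.single_apply, apply_ite σ, Finset.sum_ite_eq, Finset.sum_ite_eq']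

lemma hermPhi_add_left {n : ℕ} (M : Matrix (Fin n) (Fin n) F) (v u w : Fin n → F) :
    hermPhi σ M (v + u) w = hermPhi σ M v w + hermPhi σ M u w := by
  simp [hermPhi, add_mul, Finset.sum_add_distrib]

lemma hermPhi_add_right {n : ℕ} (M : Matrix (Fin n) (Fin n) F) (v u w : Fin n → F) :
    hermPhi σ M v (u + w) = hermPhi σ M v u + hermPhi σ M v w := by
  simp [hermPhi, mul_add, Finset.sum_add_distrib]

lemma hermPhi_smul_left {n : ℕ} (M : Matrix (Fin n) (Fin n) F) (a : F) (v w : Fin n → F) :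
    hermPhi σ M (a • v) w = σ a * hermPhi σ M v w := by
  simp only [hermPhi, Pi.smul_apply, smul_eq_mul, _root_.map_mul, Finset.mul_sum]
  exact Finset.sum_congr rfl fun k _ => Finset.sum_congr rfl fun l _ => by ring

lemma hermPhi_smul_right {n : ℕ} (M : Matrix (Fin n) (Fin n) F) (a : F) (v w : Fin n → F) :
    hermPhi σ M v (a • w) = a * hermPhi σ M v w := by
  simp only [hermPhi, Pi.smul_apply, smul_eq_mul, Finset.mul_sum]
  exact Finset.sum_congr rfl fun k _ => Finset.sum_congr rfl fun l _ => by ring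

lemma hermPhi_zero_left {n : ℕ} (M : Matrix (Fin n) (Fin n) F) (w : Fin n → F) :
    hermPhi σ M 0 w = 0 := by
  simp [hermPhi]

lemma herm_entry {n : ℕ} {M : Matrix (Fin n) (Fin n) F} (hM : (M.map σ)ᵀ = M) (i j : Fin n) :
    σ (M i j) = M j i := by
  conv_rhs => rw [← hM]
  simp

lemma hermPhi_conj {n : ℕ} {M : Matrix (Fin n) (Fin n) F} (hM : (M.map σ)ᵀ = M)
    (hσ2 : ∀ x, σ (σ x) = x) (v w : Fin n → F) :
    σ (hermPhi σ M v w) = hermPhi σ M w v := by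
  simp only [hermPhi, map_sum, _root_.map_mul, hσ2, herm_entry σ hM]
  rw [Finset.sum_comm]
  exact Finset.sum_congr rfl fun k _ => Finset.sum_congr rfl fun l _ => by ring

lemma ct_mul {n : Type*} [Fintype n] (X Y : Matrix n n F) :
    ((X * Y).map σ)ᵀ = (Y.map σ)ᵀ * (X.map σ)ᵀ := by
  rw [Matrix.map_mul, Matrix.transpose_mul]

lemma ct_ct {n : Type*} [Fintype n] (hσ2 : ∀ x, σ (σ x) = x) (X : Matrix n n F) :
    (((X.map σ)ᵀ).map σ)ᵀ = X := by
  ext i j; simp [hσ2]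

lemma ct_one {n : Type*} [Fintype n] [DecidableEq n] :
    (((1 : Matrix n n F)).map σ)ᵀ = 1 := by
  rw [Matrix.map_one σ (map_zero σ) (map_one σ), Matrix.transpose_one]

lemma isUnit_ct {n : Type*} [Fintype n] [DecidableEq n] {X : Matrix n n F} (h : IsUnit X) :
    IsUnit ((X.map σ)ᵀ) := by
  have hdet : (X.map σ).det = σ X.det := by
    rw [← RingHom.mapMatrix_apply, ← RingHom.map_det]
  rw [Matrix.isUnit_iff_isUnit_det, Matrix.det_transpose, hdet, isUnit_iff_ne_zero]
  rw [Matrix.isUnit_iff_isUnit_det, isUnit_iff_ne_zero] at h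
  exact fun hc => h (by simpa using (map_eq_zero σ).mp hc)

lemma ct_herm_congr {n : Type*} [Fintype n] (hσ2 : ∀ x, σ (σ x) = x)
    {M : Matrix n n F} (hM : (M.map σ)ᵀ = M) (B : Matrix n n F) :
    ((((B.map σ)ᵀ * M * B)).map σ)ᵀ = (B.map σ)ᵀ * M * B := by
  rw [ct_mul, ct_mul, ct_ct σ hσ2, hM, Matrix.mul_assoc]

lemma ct_reindex {n m : Type*} [Fintype n] [Fintype m] (f : n ≃ m) (X : Matrix n n F) :
    ((Matrix.reindex f f X).map σ)ᵀ = Matrix.reindex f f ((X.map σ)ᵀ) := by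
  ext i j; simp

end HermAux

theorem herm_aux {F : Type} [Field F] (σ : F →+* F) (hσ2 : ∀ x, σ (σ x) = x)
    (l0 : F) (hl0 : σ l0 ≠ l0)
    (hnorm : ∀ c : F, c ≠ 0 → σ c = c → ∃ a : F, σ a * a = c) :
    ∀ n (M : Matrix (Fin n) (Fin n) F), IsUnit M → (M.map σ)ᵀ = M →
      ∃ A : Matrix (Fin n) (Fin n) F, IsUnit A ∧ (A.map σ)ᵀ * M * A = 1 := by
  intro n
  induction n with
  | zero => exact fun M _ _ => ⟨1, isUnit_one, Subsingleton.elim _ _⟩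
  | succ n ih =>
    intro M hM hherm
    -- M is nonzero
    have hMne : ∃ i j, M i j ≠ 0 := by
      by_contra h
      push_neg at h
      have hM0 : M = 0 := by ext i j; exact h i j
      rw [hM0, Matrix.isUnit_iff_isUnit_det, Matrix.det_zero] at hM
      simp at hM
    -- Step A : an anisotropic vector exists
    have hexv : ∃ v : Fin (n+1) → F, hermPhi σ M v v ≠ 0 := by
      by_cases hd : ∃ i, M i i ≠ 0
      · obtain ⟨i, hi⟩ := hd
        refine ⟨Pi.single i 1, ?_⟩
        rw [hermPhi_single_single, _root_.map_one, one_mul, mul_one]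
        exact hi
      · push_neg at hd
        obtain ⟨i, j, hij⟩ := hMne
        have hne : i ≠ j := fun h => hij (h ▸ hd i)
        have hcases : ∃ t : F, t * M i j + σ (t * M i j) ≠ 0 := by
          by_cases h1 : M i j + σ (M i j) ≠ 0
          · exact ⟨1, by simpa using h1⟩
          · push_neg at h1
            refine ⟨l0, fun h => ?_⟩
            have hσc : σ (M i j) = -(M i j) := by linear_combination h1
            rw [_root_.map_mul, hσc] at h
            have h2 : (l0 - σ l0) * M i j = 0 := by linear_combination h
            rcases mul_eq_zero.1 h2 with h3 | h3
            · exact hl0 (by linear_combination -h3)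
            · exact hij h3
        obtain ⟨t, ht⟩ := hcases
        refine ⟨Pi.single i 1 + Pi.single j t, ?_⟩
        rw [hermPhi_add_left, hermPhi_add_right, hermPhi_add_right,
          hermPhi_single_single, hermPhi_single_single, hermPhi_single_single,
          hermPhi_single_single, hd i, hd j]
        have hji : M j i = σ (M i j) := (herm_entry σ hherm i j).symm
        intro hcon
        apply ht
        rw [_root_.map_mul]
        calc t * M i j + σ t * σ (M i j)
            = σ 1 * 0 * 1 + σ 1 * M i j * t + (σ t * M j i * 1 + σ t * 0 * t) := by
              rw [hji]; simp; ring
          _ = 0 := hcon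
    -- Step B : normalize to get w with phi w w = 1
    obtain ⟨v, hv⟩ := hexv
    have hσc : σ (hermPhi σ M v v) = hermPhi σ M v v := hermPhi_conj σ hherm hσ2 v v
    obtain ⟨a, ha⟩ := hnorm (hermPhi σ M v v)⁻¹ (inv_ne_zero hv) (by rw [map_inv₀, hσc])
    set w : Fin (n+1) → F := a • v with hwdef
    have hw1 : hermPhi σ M w w = 1 := by
      rw [hwdef, hermPhi_smul_left, hermPhi_smul_right, ← mul_assoc, ha,
        inv_mul_cancel₀ hv]
    have hwne : w ≠ 0 := by
      intro h0
      rw [h0, hermPhi_zero_left] at hw1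
      exact one_ne_zero hw1.symm
    obtain ⟨i0, hi0⟩ := Function.ne_iff.1 hwne
    -- Step C : an invertible matrix with 0-th column w
    set P : Matrix (Fin (n+1)) (Fin (n+1)) F := (Equiv.swap (0 : Fin (n+1)) i0).permMatrix F
      with hPdef
    set T : Matrix (Fin (n+1)) (Fin (n+1)) F := (1 : Matrix _ _ F).updateCol i0 w with hTdef
    have hTdet : T.det = w i0 := by
      rw [hTdef, ← Matrix.cramer_apply, Matrix.cramer_one]
      rfl
    have hT : IsUnit T := by
      rw [Matrix.isUnit_iff_isUnit_det, hTdet, isUnit_iff_ne_zero]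
      simpa using hi0
    have hP : IsUnit P := by
      rw [Matrix.isUnit_iff_isUnit_det, hPdef, Matrix.det_permutation]
      rcases Int.units_eq_one_or (Equiv.Perm.sign (Equiv.swap (0 : Fin (n+1)) i0)) with h | h <;>
        simp [h]
    set B0 : Matrix (Fin (n+1)) (Fin (n+1)) F := T * P with hB0def
    have hB0 : IsUnit B0 := hT.mul hP
    have hPcol : ∀ l : Fin (n+1), P l 0 = if l = i0 then 1 else 0 := by
      intro l
      rw [hPdef]
      simp only [Equiv.Perm.permMatrix, PEquiv.toMatrix_apply, Equiv.toPEquiv_apply,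
        Option.mem_def, Option.some.injEq]
      congr 1
      simp only [eq_iff_iff]
      constructor
      · intro h
        exact (Equiv.swap 0 i0).injective (h.trans (Equiv.swap_apply_right 0 i0).symm)
      · intro h; rw [h]; exact Equiv.swap_apply_right 0 i0
    have hcol : ∀ k, B0 k 0 = w k := by
      intro k
      rw [hB0def, Matrix.mul_apply]
      simp only [hPcol, mul_ite, mul_one, mul_zero]
      rw [Finset.sum_ite_eq' Finset.univ i0 (fun l => T k l)]
      simp [hTdef, Matrix.updateCol_apply]
    -- the congruent matrix N has pivot 1
    set N : Matrix (Fin (n+1)) (Fin (n+1)) F := (B0.map σ)ᵀ * M * B0 with hNdef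
    have hNherm : (N.map σ)ᵀ = N := ct_herm_congr σ hσ2 hherm B0
    have hNunit : IsUnit N := ((isUnit_ct σ hB0).mul hM).mul hB0
    have hN00 : N 0 0 = 1 := by
      rw [hNdef, hermPhi_entry]
      have : (fun k => B0 k 0) = w := funext hcol
      rw [this]
      exact hw1
    -- Step D : clear the first row and column
    set C : Matrix (Fin (n+1)) (Fin (n+1)) F :=
      Matrix.of (fun k j => if k = j then 1 else if k = 0 then -(N 0 j) else 0) with hCdef
    have hCtri : C.BlockTriangular id := by
      intro i j hji
      have h1 : i ≠ j := by exact fun h => absurd (h ▸ hji) (lt_irrefl _)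
      have h2 : i ≠ 0 := by
        intro h
        rw [h] at hji
        exact absurd hji (by simp)
      simp [hCdef, h1, h2]
    have hCdet : C.det = 1 := by
      rw [Matrix.det_of_upperTriangular hCtri]
      simp [hCdef]
    have hC : IsUnit C := by
      rw [Matrix.isUnit_iff_isUnit_det, hCdet]; exact isUnit_one
    have hCcol0 : (fun k => C k 0) = Pi.single (0 : Fin (n+1)) 1 := by
      funext k
      by_cases hk : k = 0 <;> simp [hCdef, hk, Pi.single_apply]
    have hCcols : ∀ j : Fin (n+1), j ≠ 0 →
        (fun k => C k j) = Pi.single j 1 + Pi.single (0 : Fin (n+1)) (-(N 0 j)) := by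
      intro j hj
      funext k
      by_cases hk : k = j
      · simp [hCdef, hk, Pi.single_apply, hj.symm, Ne.symm hj]
      · by_cases hk0 : k = 0
        · simp [hCdef, hk, hk0, Pi.single_apply, Ne.symm hj]
        · simp [hCdef, hk, hk0, Pi.single_apply]
    set N' : Matrix (Fin (n+1)) (Fin (n+1)) F := (C.map σ)ᵀ * N * C with hN'def
    have hN'herm : (N'.map σ)ᵀ = N' := ct_herm_congr σ hσ2 hNherm C
    have hN'unit : IsUnit N' := ((isUnit_ct σ hC).mul hNunit).mul hC
    have hN'00 : N' 0 0 = 1 := by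
      rw [hN'def, hermPhi_entry, hCcol0, hermPhi_single_single, hN00]
      simp
    have hN'0s : ∀ j : Fin n, N' 0 j.succ = 0 := by
      intro j
      rw [hN'def, hermPhi_entry, hCcol0, hCcols j.succ (Fin.succ_ne_zero j),
        hermPhi_add_right, hermPhi_single_single, hermPhi_single_single, hN00]
      simp
    have hN's0 : ∀ i : Fin n, N' i.succ 0 = 0 := by
      intro i
      rw [hN'def, hermPhi_entry, hCcol0, hCcols i.succ (Fin.succ_ne_zero i),
        hermPhi_add_left, hermPhi_single_single, hermPhi_single_single, hN00]
      rw [_root_.map_one, _root_.map_neg, herm_entry σ hNherm]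
      ring
    -- reindex to a block matrix
    set e : Fin (n+1) ≃ Fin 1 ⊕ Fin n :=
      (finSumFinEquiv.trans (finCongr (Nat.add_comm 1 n))).symm with hedef
    have he_inl : ∀ (x : Fin 1), e.symm (Sum.inl x) = 0 := by
      intro x
      have hx : x = 0 := Subsingleton.elim x 0
      subst hx
      rfl
    have he_inr : ∀ (x : Fin n), e.symm (Sum.inr x) = x.succ := by
      intro x
      apply Fin.ext
      simp [hedef, finSumFinEquiv]
      try omega
    set N1 : Matrix (Fin n) (Fin n) F := N'.submatrix Fin.succ Fin.succ with hN1def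
    have hblock : Matrix.reindex e e N' = Matrix.fromBlocks 1 0 0 N1 := by
      ext i j
      rcases i with i | i <;> rcases j with j | j
      · have hi : i = 0 := Subsingleton.elim i 0
        have hj : j = 0 := Subsingleton.elim j 0
        subst hi; subst hj
        simp [Matrix.reindex_apply, he_inl, hN'00, Matrix.one_apply]
      · have hi : i = 0 := Subsingleton.elim i 0
        subst hi
        simp [Matrix.reindex_apply, he_inl, he_inr, hN'0s j]
      · have hj : j = 0 := Subsingleton.elim j 0
        subst hj
        simp [Matrix.reindex_apply, he_inl, he_inr, hN's0 i]
      · simp [Matrix.reindex_apply, he_inr, hN1def]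
    have hN1unit : IsUnit N1 := by
      rw [Matrix.isUnit_iff_isUnit_det] at hN'unit ⊢
      rw [← Matrix.det_reindex_self e N', hblock, Matrix.det_fromBlocks_zero₂₁,
        Matrix.det_one, one_mul] at hN'unit
      exact hN'unit
    have hN1herm : (N1.map σ)ᵀ = N1 := by
      ext i j
      show σ (N1 j i) = N1 i j
      rw [hN1def]
      exact herm_entry σ hN'herm j.succ i.succ
    obtain ⟨A1, hA1u, hA1⟩ := ih N1 hN1unit hN1herm
    set W : Matrix (Fin 1 ⊕ Fin n) (Fin 1 ⊕ Fin n) F := Matrix.fromBlocks 1 0 0 A1 with hWdef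
    set D : Matrix (Fin (n+1)) (Fin (n+1)) F := Matrix.reindex e.symm e.symm W with hDdef
    have hDunit : IsUnit D := by
      rw [Matrix.isUnit_iff_isUnit_det, hDdef, Matrix.det_reindex_self, hWdef,
        Matrix.det_fromBlocks_zero₂₁]
      simpa using (Matrix.isUnit_iff_isUnit_det A1).1 hA1u
    -- final computation
    have hctW : (W.map σ)ᵀ = Matrix.fromBlocks 1 0 0 ((A1.map σ)ᵀ) := by
      rw [hWdef, Matrix.fromBlocks_map, Matrix.fromBlocks_transpose,
        Matrix.map_zero _ (map_zero σ), Matrix.map_zero _ (map_zero σ),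
        Matrix.map_one _ (map_zero σ) (_root_.map_one σ),
        Matrix.transpose_zero, Matrix.transpose_zero, Matrix.transpose_one]
    have hreindex_mul : ∀ X Y : Matrix (Fin (n+1)) (Fin (n+1)) F,
        Matrix.reindex e e (X * Y) = Matrix.reindex e e X * Matrix.reindex e e Y := by
      intro X Y
      rw [Matrix.reindex_apply, Matrix.reindex_apply, Matrix.reindex_apply,
        Matrix.submatrix_mul_equiv]
    have hfin : (D.map σ)ᵀ * N' * D = 1 := by
      have h1 : Matrix.reindex e e ((D.map σ)ᵀ * N' * D) = 1 := by
        rw [hreindex_mul, hreindex_mul, hblock]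
        have hD2 : Matrix.reindex e e D = W := by
          rw [hDdef]
          ext i j
          simp
        have hD1 : Matrix.reindex e e ((D.map σ)ᵀ)
            = Matrix.fromBlocks 1 0 0 ((A1.map σ)ᵀ) := by
          rw [hDdef, ct_reindex, ← hctW]
          ext i j
          simp
        rw [hD1, hD2, hWdef, Matrix.fromBlocks_multiply, Matrix.fromBlocks_multiply]
        simp only [Matrix.mul_one, Matrix.one_mul, Matrix.mul_zero, Matrix.zero_mul,
          add_zero, zero_add]
        rw [hA1]
        exact Matrix.fromBlocks_one
      have h2 := congrArg (Matrix.reindex e e).symm h1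
      rw [Equiv.symm_apply_apply] at h2
      rw [h2, Matrix.reindex_symm, Matrix.reindex_apply, Matrix.submatrix_one_equiv]
    refine ⟨B0 * C * D, (hB0.mul hC).mul hDunit, ?_⟩
    rw [ct_mul, ct_mul]
    calc (D.map σ)ᵀ * ((C.map σ)ᵀ * (B0.map σ)ᵀ) * M * (B0 * C * D)
        = (D.map σ)ᵀ * N' * D := by
          rw [hN'def, hNdef]
          simp only [Matrix.mul_assoc]
      _ = 1 := hfin

/-- Let `q` be a power of an odd prime and `n ≥ 1`.  Every
non-degenerate hermitian form on an `n`-dimensional `F_{q^2}`-vector space is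
isomorphic to the standard one: for every invertible `n × n` matrix `M` over a
field `F` with `q^2` elements satisfying `conj(M)ᵀ = M` (where `conj` raises
every entry to the `q`-th power), there is `A ∈ GL_n(F)` with
`conj(A)ᵀ * M * A = 1`. -/
theorem hermitian_forms_isomorphic_to_standard
    (p m q : ℕ) (hp : Nat.Prime p) (hodd : p ≠ 2) (hm : 1 ≤ m) (hq : q = p ^ m)
    (F : Type) [Field F] [Fintype F] (hF : Fintype.card F = q ^ 2)
    (n : ℕ) (hn : 1 ≤ n)
    (M : Matrix (Fin n) (Fin n) F) (hM : IsUnit M)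
    (hherm : (M.map fun x => x ^ q)ᵀ = M) :
    ∃ A : Matrix (Fin n) (Fin n) F, IsUnit A ∧
      (A.map fun x => x ^ q)ᵀ * M * A = 1 := by
  classical
  have hq2 : 2 ≤ q := by
    have hp2 : 2 ≤ p := hp.two_le
    calc 2 ≤ p := hp2
      _ ≤ p ^ m := Nat.le_self_pow (by omega) p
      _ = q := hq.symm
  haveI : Fact (Nat.Prime p) := ⟨hp⟩
  -- characteristic
  have hcard : Fintype.card F = p ^ (2 * m) := by rw [hF, hq, ← pow_mul, Nat.mul_comm]
  have hrc : ringChar F = p := by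
    have h1 : ((Fintype.card F : ℕ) : F) = 0 := FiniteField.cast_card_eq_zero F
    rw [hcard] at h1
    have h2 : ringChar F ∣ p ^ (2 * m) := (CharP.cast_eq_zero_iff F (ringChar F) _).1 h1
    have hrp : (ringChar F).Prime := CharP.char_is_prime F (ringChar F)
    exact (Nat.prime_dvd_prime_iff_eq hrp hp).1 (hrp.dvd_of_dvd_pow h2)
  haveI hchar : CharP F p := hrc ▸ ringChar.charP F
  -- the conjugation ring hom
  set σ : F →+* F := iterateFrobenius F p m with hσdef0
  have hσdef : ∀ x : F, σ x = x ^ q := fun x => by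
    rw [hσdef0, iterateFrobenius_def, hq]
  have hσ2 : ∀ x : F, σ (σ x) = x := by
    intro x
    rw [hσdef, hσdef, ← pow_mul, show q * q = Fintype.card F by rw [hF, sq]]
    exact FiniteField.pow_card x
  -- a generator of the unit group
  obtain ⟨g, hg⟩ := IsCyclic.exists_generator (α := Fˣ)
  have horder : orderOf g = q ^ 2 - 1 := by
    rw [orderOf_eq_card_of_forall_mem_zpowers hg, Nat.card_eq_fintype_card,
      Fintype.card_units, hF]
  -- an element not fixed by σ
  have hl0 : σ ((g : Fˣ) : F) ≠ ((g : Fˣ) : F) := by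
    rw [hσdef]
    intro h
    have hu : g ^ q = g := Units.ext (by push_cast; exact h)
    have h1 : g ^ (q - 1) = 1 := by
      have h2 : g ^ (q - 1) * g = 1 * g := by
        rw [one_mul, ← pow_succ, Nat.sub_add_cancel (by omega : 1 ≤ q), hu]
      exact mul_right_cancel h2
    have hdvd : q ^ 2 - 1 ∣ q - 1 := horder ▸ orderOf_dvd_of_pow_eq_one h1
    have hle := Nat.le_of_dvd (by omega) hdvd
    have hqq : q + 2 ≤ q ^ 2 := by nlinarith
    omega
  -- norm surjectivity
  have hnorm : ∀ c : F, c ≠ 0 → σ c = c → ∃ a : F, σ a * a = c := by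
    intro c hc hcq
    rw [hσdef] at hcq
    set u : Fˣ := Units.mk0 c hc with hudef
    obtain ⟨k, hk⟩ : u ∈ Submonoid.powers g := by
      rw [mem_powers_iff_mem_zpowers]; exact hg u
    have hk' : g ^ k = u := hk
    have hu1 : u ^ (q - 1) = 1 := by
      have huq : u ^ q = u := Units.ext (by push_cast [hudef]; exact hcq)
      have h2 : u ^ (q - 1) * u = 1 * u := by
        rw [one_mul, ← pow_succ, Nat.sub_add_cancel (by omega : 1 ≤ q), huq]
      exact mul_right_cancel h2
    have hgk : g ^ (k * (q - 1)) = 1 := by rw [pow_mul, hk', hu1]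
    have hdvd : q ^ 2 - 1 ∣ k * (q - 1) := horder ▸ orderOf_dvd_of_pow_eq_one hgk
    have hfact : (q + 1) * (q - 1) = q ^ 2 - 1 := by
      obtain ⟨r, hr⟩ : ∃ r, q = r + 1 := ⟨q - 1, by omega⟩
      rw [hr]
      have h5 : (r + 1 + 1) * (r + 1 - 1) = r * r + 2 * r := by
        rw [Nat.add_sub_cancel]; ring
      have h6 : (r + 1) ^ 2 = r * r + 2 * r + 1 := by ring
      omega
    have hdvd2 : (q + 1) ∣ k := by
      have h5 : (q + 1) * (q - 1) ∣ k * (q - 1) := hfact ▸ hdvd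
      exact (Nat.mul_dvd_mul_iff_right (by omega : 0 < q - 1)).1 h5
    obtain ⟨j, hj⟩ := hdvd2
    refine ⟨((g ^ j : Fˣ) : F), ?_⟩
    have hval : (g ^ j) ^ q * g ^ j = u := by
      rw [← pow_mul, ← pow_add, show j * q + j = (q + 1) * j by ring, ← hj, hk']
    calc σ ((g ^ j : Fˣ) : F) * ((g ^ j : Fˣ) : F)
        = (((g ^ j) ^ q * g ^ j : Fˣ) : F) := by rw [hσdef]; push_cast; ring
      _ = (u : F) := by rw [hval]
      _ = c := rfl
  -- apply the induction theorem
  have hherm' : (M.map σ)ᵀ = M := by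
    have : M.map σ = M.map fun x => x ^ q := by
      ext i j; simp [Matrix.map_apply, hσdef]
    rw [this, hherm]
  obtain ⟨A, hAu, hA⟩ := herm_aux σ hσ2 _ hl0 hnorm n M hM hherm'
  refine ⟨A, hAu, ?_⟩
  have : A.map (fun x => x ^ q) = A.map σ := by
    ext i j; simp [Matrix.map_apply, hσdef]
  rw [this, hA]
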